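/- Let (T, A)_ω be a DL-Lite_core weighted knowledge base, k an integer, r a role name, and a, b individual names. Let Ā be a fresh concept name, T' = T ∪ {Ā ⊓ ∃r ⊑ ⊥}, A' = A ∪ {r(a,b), Ā(a)}, and let ω' extend ω by assigning weight ∞ to the axiom Ā ⊓ ∃r ⊑ ⊥ and to the assertion r(a,b), and weight 1 to the assertion Ā(a). Then (T, A)_ω ⊨_p^k r(a,b) if and only if (T', A')_{ω'} ⊭_c^{k+1} Ā(a). -/

import Mathlib

namespace DL

/-! ### Syntax -/

abbrev IndName := ℕ
abbrev CName := ℕ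
abbrev RName := ℕ

/-- Roles: role names and inverse roles. -/
inductive Role where
  | name : RName → Role
  | inv  : RName → Role
deriving DecidableEq

/-- `ALCHIO` concepts. -/
inductive Concept where
  | top  : Concept
  | bot  : Concept
  | atom : CName → Concept
  | nom  : IndName → Concept
  | neg  : Concept → Concept
  | conj : Concept → Concept → Concept
  | ex   : Role → Concept → Concept
deriving DecidableEq

/-- TBox axioms: concept inclusions and role inclusions. -/
inductive Axiom where
  | ci : Concept → Concept → Axiom
  | ri : Role → Role → Axiom
deriving DecidableEq

/-- ABox assertions. -/
inductive Assertion where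
  | ca : CName → IndName → Assertion
  | ra : RName → IndName → IndName → Assertion
deriving DecidableEq

/-! ### Interpretations -/

/-- A DL interpretation with domain a subset of a universe `U`.  Individual names are
interpreted via `indI` (under the standard names assumption, the individual names of the
ABox under consideration are interpreted "as themselves", i.e. injectively). -/
structure Interp (U : Type) where
  dom : Set U
  indI : IndName → U
  cI : CName → Set U
  rI : RName → Set (U × U)
  cI_sub : ∀ A, cI A ⊆ dom
  rI_sub : ∀ r p, p ∈ rI r → p.1 ∈ dom ∧ p.2 ∈ dom

variable {U : Type}

/-- Every individual name denotes an element of the domain. -/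
def Interp.Proper (I : Interp U) : Prop := ∀ a, I.indI a ∈ I.dom

def Role.interp (I : Interp U) : Role → Set (U × U)
  | Role.name r => I.rI r
  | Role.inv r  => {p | (p.2, p.1) ∈ I.rI r}

def Concept.interp (I : Interp U) : Concept → Set U
  | Concept.top => I.dom
  | Concept.bot => ∅
  | Concept.atom A => I.cI A
  | Concept.nom a => {I.indI a} ∩ I.dom
  | Concept.neg C => I.dom \ Concept.interp I C
  | Concept.conj C D => Concept.interp I C ∩ Concept.interp I D
  | Concept.ex r C => {d | ∃ e, (d, e) ∈ Role.interp I r ∧ e ∈ Concept.interp I C}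

def Assertion.sat (I : Interp U) : Assertion → Prop
  | Assertion.ca A a => I.indI a ∈ I.cI A
  | Assertion.ra r a b => (I.indI a, I.indI b) ∈ I.rI r

/-! ### Violations and cost -/

/-- Violations of a concept inclusion `C ⊑ D`. -/
def vioCI (I : Interp U) (C D : Concept) : Set U :=
  Concept.interp I C \ Concept.interp I D

/-- Violations of a role inclusion `r ⊑ s`. -/
def vioRI (I : Interp U) (r s : Role) : Set (U × U) :=
  Role.interp I r \ Role.interp I s

/-- The number of violations of an axiom. -/
noncomputable def Axiom.vioCount (I : Interp U) : Axiom → ℕ∞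
  | Axiom.ci C D => (vioCI I C D).encard
  | Axiom.ri r s => (vioRI I r s).encard

open Classical in
/-- The cost of an interpretation w.r.t. a weighted knowledge base `(T, A)` with weight
functions `wT` (on TBox axioms) and `wA` (on ABox assertions). -/
noncomputable def cost (T : Finset Axiom) (A : Finset Assertion)
    (wT : Axiom → ℕ∞) (wA : Assertion → ℕ∞) (I : Interp U) : ℕ∞ :=
  (∑ τ ∈ T, wT τ * Axiom.vioCount I τ) +
    ∑ α ∈ A, (if Assertion.sat I α then 0 else wA α)

/-! ### Queries -/

inductive Term where
  | var : ℕ → Term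
  | ind : IndName → Term
deriving DecidableEq

inductive QAtom where
  | ca : CName → Term → QAtom
  | ra : RName → Term → Term → QAtom
deriving DecidableEq

/-- A Boolean conjunctive query: a finite set of atoms, all of whose variables are
(implicitly) existentially quantified. -/
abbrev BCQ := Finset QAtom

def Term.eval (I : Interp U) (π : ℕ → U) : Term → U
  | Term.var v => π v
  | Term.ind a => I.indI a

def QAtom.sat (I : Interp U) (π : ℕ → U) : QAtom → Prop
  | QAtom.ca A t => Term.eval I π t ∈ I.cI A
  | QAtom.ra r t t' => (Term.eval I π t, Term.eval I π t') ∈ I.rI r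

/-- Satisfaction of a BCQ in an interpretation. -/
def satQ (I : Interp U) (q : BCQ) : Prop :=
  ∃ π : ℕ → U, (∀ v, π v ∈ I.dom) ∧ ∀ a ∈ q, QAtom.sat I π a

/-- An instance query is a BCQ with a single atom. -/
def IsIQ (q : BCQ) : Prop := ∃ a : QAtom, q = {a}

/-! ### Cost-based semantics -/

/-- `k`-satisfiability: some interpretation has cost at most `k`. -/
def ksat (T : Finset Axiom) (A : Finset Assertion)
    (wT : Axiom → ℕ∞) (wA : Assertion → ℕ∞) (k : ℕ) : Prop :=
  ∃ (U : Type) (I : Interp U), I.Proper ∧ cost T A wT wA I ≤ (k : ℕ∞)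

/-- `K ⊨ₚᵏ q`: some interpretation of cost at most `k` satisfies `q`. -/
def satP (T : Finset Axiom) (A : Finset Assertion)
    (wT : Axiom → ℕ∞) (wA : Assertion → ℕ∞) (k : ℕ) (q : BCQ) : Prop :=
  ∃ (U : Type) (I : Interp U), I.Proper ∧ cost T A wT wA I ≤ (k : ℕ∞) ∧ satQ I q

/-- `K ⊨꜀ᵏ q`: every interpretation of cost at most `k` satisfies `q`. -/
def satC (T : Finset Axiom) (A : Finset Assertion)
    (wT : Axiom → ℕ∞) (wA : Assertion → ℕ∞) (k : ℕ) (q : BCQ) : Prop :=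
  ∀ (U : Type) (I : Interp U), I.Proper → cost T A wT wA I ≤ (k : ℕ∞) → satQ I q

/-- The optimal cost of a weighted knowledge base. -/
noncomputable def optCost (T : Finset Axiom) (A : Finset Assertion)
    (wT : Axiom → ℕ∞) (wA : Assertion → ℕ∞) : ℕ∞ :=
  sInf {c : ℕ∞ | ∃ (U : Type) (I : Interp U), I.Proper ∧ cost T A wT wA I = c}

/-- `K ⊨ₚᵒᵖᵗ q`: some interpretation of optimal cost satisfies `q`. -/
noncomputable def satPopt (T : Finset Axiom) (A : Finset Assertion)
    (wT : Axiom → ℕ∞) (wA : Assertion → ℕ∞) (q : BCQ) : Prop :=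
  ∃ (U : Type) (I : Interp U), I.Proper ∧ cost T A wT wA I = optCost T A wT wA ∧ satQ I q

/-- `K ⊨꜀ᵒᵖᵗ q`: every interpretation of optimal cost satisfies `q`. -/
noncomputable def satCopt (T : Finset Axiom) (A : Finset Assertion)
    (wT : Axiom → ℕ∞) (wA : Assertion → ℕ∞) (q : BCQ) : Prop :=
  ∀ (U : Type) (I : Interp U), I.Proper → cost T A wT wA I = optCost T A wT wA → satQ I q

/-! ### Occurrences of symbols -/

def Role.base : Role → RName
  | Role.name r => r
  | Role.inv r => r

def Concept.cnames : Concept → Finset CName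
  | Concept.atom A => {A}
  | Concept.neg C => C.cnames
  | Concept.conj C D => C.cnames ∪ D.cnames
  | Concept.ex _ C => C.cnames
  | _ => ∅

def Concept.rnames : Concept → Finset RName
  | Concept.neg C => C.rnames
  | Concept.conj C D => C.rnames ∪ D.rnames
  | Concept.ex r C => insert r.base C.rnames
  | _ => ∅

def Concept.indNames : Concept → Finset IndName
  | Concept.nom a => {a}
  | Concept.neg C => C.indNames
  | Concept.conj C D => C.indNames ∪ D.indNames
  | Concept.ex _ C => C.indNames
  | _ => ∅

def Axiom.cnames : Axiom → Finset CName
  | Axiom.ci C D => C.cnames ∪ D.cnames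
  | Axiom.ri _ _ => ∅

def Axiom.rnames : Axiom → Finset RName
  | Axiom.ci C D => C.rnames ∪ D.rnames
  | Axiom.ri r s => {r.base, s.base}

def Axiom.indNames : Axiom → Finset IndName
  | Axiom.ci C D => C.indNames ∪ D.indNames
  | Axiom.ri _ _ => ∅

def Assertion.cnames : Assertion → Finset CName
  | Assertion.ca A _ => {A}
  | Assertion.ra _ _ _ => ∅

def Assertion.rnames : Assertion → Finset RName
  | Assertion.ca _ _ => ∅
  | Assertion.ra r _ _ => {r}

def Assertion.indNames : Assertion → Finset IndName
  | Assertion.ca _ a => {a}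
  | Assertion.ra _ a b => {a, b}

/-- The individual names occurring in an ABox. -/
def aboxInds (A : Finset Assertion) : Finset IndName := A.biUnion Assertion.indNames

/-- The individual names occurring in a KB. -/
def kbInds (T : Finset Axiom) (A : Finset Assertion) : Finset IndName :=
  T.biUnion Axiom.indNames ∪ aboxInds A

def Term.indNames : Term → Finset IndName
  | Term.var _ => ∅
  | Term.ind a => {a}

def QAtom.indNames : QAtom → Finset IndName
  | QAtom.ca _ t => t.indNames
  | QAtom.ra _ t t' => t.indNames ∪ t'.indNames

def QAtom.cnames : QAtom → Finset CName
  | QAtom.ca A _ => {A}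
  | QAtom.ra _ _ _ => ∅

def qInds (q : BCQ) : Finset IndName := q.biUnion QAtom.indNames

def qCnames (q : BCQ) : Finset CName := q.biUnion QAtom.cnames

/-! ### Sizes -/

def Concept.size : Concept → ℕ
  | Concept.top => 1
  | Concept.bot => 1
  | Concept.atom _ => 1
  | Concept.nom _ => 1
  | Concept.neg C => C.size + 1
  | Concept.conj C D => C.size + D.size + 1
  | Concept.ex _ C => C.size + 2

def Axiom.size : Axiom → ℕ
  | Axiom.ci C D => C.size + D.size + 1
  | Axiom.ri _ _ => 3

def Assertion.size : Assertion → ℕ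
  | Assertion.ca _ _ => 2
  | Assertion.ra _ _ _ => 3

def tboxSize (T : Finset Axiom) : ℕ := ∑ τ ∈ T, τ.size

def aboxSize (A : Finset Assertion) : ℕ := ∑ α ∈ A, α.size

/-! ### DL-Lite fragments -/

/-- Basic concepts: concept names and unqualified existential restrictions `∃r` (with a
possibly inverse role `r`), the latter rendered as `∃r.⊤`. -/
inductive IsBasic : Concept → Prop
  | atom (A : CName) : IsBasic (Concept.atom A)
  | ex (r : Role) : IsBasic (Concept.ex r Concept.top)

/-- A `DL-Lite_core` axiom: `B ⊑ C` or `B ⊓ C ⊑ ⊥` with `B, C` basic concepts. -/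
def IsCoreAxiom (τ : Axiom) : Prop :=
  (∃ B C, τ = Axiom.ci B C ∧ IsBasic B ∧ IsBasic C) ∨
  (∃ B C, τ = Axiom.ci (Concept.conj B C) Concept.bot ∧ IsBasic B ∧ IsBasic C)

def IsDLLiteCore (T : Finset Axiom) : Prop := ∀ τ ∈ T, IsCoreAxiom τ

/-- Concepts built from basic concepts using `¬`, `⊓` (and hence also `⊔`). -/
inductive IsBoolConcept : Concept → Prop
  | basic {C} : IsBasic C → IsBoolConcept C
  | neg {C} : IsBoolConcept C → IsBoolConcept (Concept.neg C)
  | conj {C D} : IsBoolConcept C → IsBoolConcept D → IsBoolConcept (Concept.conj C D)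

/-- A `DL-Lite_bool^H` axiom: a concept inclusion between Boolean combinations of basic
concepts, or a role inclusion. -/
def IsBoolHAxiom (τ : Axiom) : Prop :=
  (∃ C D, τ = Axiom.ci C D ∧ IsBoolConcept C ∧ IsBoolConcept D) ∨ (∃ r s, τ = Axiom.ri r s)

def IsDLLiteBoolH (T : Finset Axiom) : Prop := ∀ τ ∈ T, IsBoolHAxiom τ

/-! ### Auxiliary material for Statement 9 -/

/-- Mask out a concept name, interpreting it as `∅`. -/
def mask (I : Interp U) (X : CName) : Interp U where
  dom := I.dom
  indI := I.indI
  cI := fun A => if A = X then ∅ else I.cI A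
  rI := I.rI
  cI_sub := fun A => by
    split
    · simp
    · exact I.cI_sub A
  rI_sub := I.rI_sub

lemma roleInterp_mask (I : Interp U) (X : CName) (ρ : Role) :
    Role.interp (mask I X) ρ = Role.interp I ρ := by
  cases ρ <;> rfl

lemma interp_mask (I : Interp U) (X : CName) (C : Concept) (h : X ∉ C.cnames) :
    Concept.interp (mask I X) C = Concept.interp I C := by
  induction C with
  | top => rfl
  | bot => rfl
  | atom A =>
    have : A ≠ X := by
      intro hAX; apply h; simp [Concept.cnames, hAX]
    simp [Concept.interp, mask, this]
  | nom a => rfl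
  | neg C ih =>
    have hC : X ∉ C.cnames := h
    simp only [Concept.interp, ih hC]; rfl
  | conj C D ihC ihD =>
    have hC : X ∉ C.cnames := fun hx => h (by simp [Concept.cnames, hx])
    have hD : X ∉ D.cnames := fun hx => h (by simp [Concept.cnames, hx])
    simp only [Concept.interp, ihC hC, ihD hD]
  | ex ρ C ih =>
    have hC : X ∉ C.cnames := h
    simp only [Concept.interp, ih hC, roleInterp_mask]

lemma vioCount_mask (I : Interp U) (X : CName) (τ : Axiom) (h : X ∉ τ.cnames) :
    Axiom.vioCount (mask I X) τ = Axiom.vioCount I τ := by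
  cases τ with
  | ci C D =>
    have hC : X ∉ C.cnames := fun hx => h (by simp [Axiom.cnames, hx])
    have hD : X ∉ D.cnames := fun hx => h (by simp [Axiom.cnames, hx])
    simp only [Axiom.vioCount, vioCI, interp_mask _ _ _ hC, interp_mask _ _ _ hD]
  | ri ρ σ =>
    simp only [Axiom.vioCount, vioRI, roleInterp_mask]

lemma sat_mask (I : Interp U) (X : CName) (α : Assertion) (h : X ∉ α.cnames) :
    Assertion.sat (mask I X) α ↔ Assertion.sat I α := by
  cases α with
  | ca A c =>
    have : A ≠ X := by intro hAX; apply h; simp [Assertion.cnames, hAX]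
    simp [Assertion.sat, mask, this]
  | ra ρ c d => rfl

lemma satQ_ca (J : Interp U) (hJ : J.Proper) (X : CName) (a : IndName) :
    satQ J ({QAtom.ca X (Term.ind a)} : BCQ) ↔ J.indI a ∈ J.cI X := by
  constructor
  · rintro ⟨π, _, hsat⟩
    simpa [QAtom.sat, Term.eval] using hsat _ (Finset.mem_singleton_self _)
  · intro h
    exact ⟨fun _ => J.indI a, fun _ => hJ a, by simp [QAtom.sat, Term.eval, h]⟩

lemma satQ_ra (J : Interp U) (hJ : J.Proper) (r : RName) (a b : IndName) :
    satQ J ({QAtom.ra r (Term.ind a) (Term.ind b)} : BCQ) ↔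
      (J.indI a, J.indI b) ∈ J.rI r := by
  constructor
  · rintro ⟨π, _, hsat⟩
    simpa [QAtom.sat, Term.eval] using hsat _ (Finset.mem_singleton_self _)
  · intro h
    exact ⟨fun _ => J.indI a, fun _ => hJ a, by simp [QAtom.sat, Term.eval, h]⟩

open Classical in
lemma cost_aux {U : Type} (J : Interp U) (T : Finset Axiom) (A : Finset Assertion)
    (wT : Axiom → ℕ∞) (wA : Assertion → ℕ∞)
    (τ₀ : Axiom) (α₁ α₂ : Assertion) (hτ₀ : τ₀ ∉ T) (hα₂ : α₂ ∉ A) (h12 : α₂ ≠ α₁)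
    (wT' : Axiom → ℕ∞) (wA' : Assertion → ℕ∞)
    (hwT' : ∀ τ ∈ T, wT' τ = wT τ)
    (hwA' : ∀ α ∈ A, α ≠ α₁ → wA' α = wA α)
    (hα₂w : wA' α₂ = 1)
    (hsat1 : Assertion.sat J α₁) (hsat2 : ¬ Assertion.sat J α₂) :
    cost (insert τ₀ T) (insert α₁ (insert α₂ A)) wT' wA' J
      = wT' τ₀ * Axiom.vioCount J τ₀ + (1 + cost T A wT wA J) := by
  unfold cost
  have hT : ∑ τ ∈ insert τ₀ T, wT' τ * Axiom.vioCount J τ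
      = wT' τ₀ * Axiom.vioCount J τ₀ + ∑ τ ∈ T, wT τ * Axiom.vioCount J τ := by
    rw [Finset.sum_insert hτ₀]
    congr 1
    exact Finset.sum_congr rfl fun τ hτ => by rw [hwT' τ hτ]
  have hA1 : ∑ α ∈ insert α₁ A, (if Assertion.sat J α then 0 else wA' α)
      = ∑ α ∈ A, (if Assertion.sat J α then 0 else wA α) := by
    have hcong : ∀ α ∈ A, (if Assertion.sat J α then (0:ℕ∞) else wA' α)
        = (if Assertion.sat J α then 0 else wA α) := by
      intro α hα
      by_cases hs : Assertion.sat J α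
      · simp [hs]
      · have hne : α ≠ α₁ := fun h => hs (h ▸ hsat1)
        simp [hs, hwA' α hα hne]
    by_cases h1 : α₁ ∈ A
    · rw [Finset.insert_eq_self.mpr h1]; exact Finset.sum_congr rfl hcong
    · rw [Finset.sum_insert h1, if_pos hsat1, zero_add]
      exact Finset.sum_congr rfl hcong
  have hA : ∑ α ∈ insert α₁ (insert α₂ A), (if Assertion.sat J α then 0 else wA' α)
      = 1 + ∑ α ∈ A, (if Assertion.sat J α then 0 else wA α) := by
    rw [Finset.insert_comm, Finset.sum_insert (by simp [h12, hα₂]),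
      if_neg hsat2, hα₂w, hA1]
  rw [hT, hA]
  ring

/-- (Reduction of `IQAₚᵏ` to the complement of `IQA꜀ᵏ⁺¹`, role
assertion query.)  With a fresh concept name `Xb` (`= Ā`),
`T' = T ∪ {Xb ⊓ ∃r ⊑ ⊥}`, `A' = A ∪ {r(a,b), Xb(a)}`, weight `∞` on the new axiom and on
`r(a,b)`, and weight `1` on `Xb(a)`:
`(T,A)_ω ⊨ₚᵏ r(a,b)` iff `(T',A')_{ω'} ⊭꜀ᵏ⁺¹ Xb(a)`. -/
theorem statement9 (T : Finset Axiom) (hcore : IsDLLiteCore T)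
    (A : Finset Assertion) (wT : Axiom → ℕ∞) (wA : Assertion → ℕ∞)
    (hwT : ∀ τ ∈ T, 1 ≤ wT τ) (hwA : ∀ α ∈ A, 1 ≤ wA α)
    (k : ℕ) (r : RName) (a b : IndName)
    (Xb : CName)
    (hXbT : ∀ τ ∈ T, Xb ∉ Axiom.cnames τ) (hXbA : ∀ α ∈ A, Xb ∉ Assertion.cnames α) :
    satP T A wT wA k {QAtom.ra r (Term.ind a) (Term.ind b)} ↔
      ¬ satC
          (insert (Axiom.ci
            (Concept.conj (Concept.atom Xb) (Concept.ex (Role.name r) Concept.top))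
            Concept.bot) T)
          (insert (Assertion.ra r a b) (insert (Assertion.ca Xb a) A))
          (fun τ =>
            if τ = Axiom.ci
                (Concept.conj (Concept.atom Xb) (Concept.ex (Role.name r) Concept.top))
                Concept.bot then ⊤
            else wT τ)
          (fun α =>
            if α = Assertion.ca Xb a then 1
            else if α = Assertion.ra r a b then ⊤
            else wA α)
          (k + 1) {QAtom.ca Xb (Term.ind a)} := by
  classical
  set τ₀ : Axiom := Axiom.ci
      (Concept.conj (Concept.atom Xb) (Concept.ex (Role.name r) Concept.top))
      Concept.bot with hτ₀def
  set α₁ : Assertion := Assertion.ra r a b with hα₁def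
  set α₂ : Assertion := Assertion.ca Xb a with hα₂def
  set wT' : Axiom → ℕ∞ := fun τ => if τ = τ₀ then ⊤ else wT τ with hwT'def
  set wA' : Assertion → ℕ∞ :=
    fun α => if α = α₂ then 1 else if α = α₁ then ⊤ else wA α with hwA'def
  have hXτ₀ : Xb ∈ Axiom.cnames τ₀ := by
    simp [hτ₀def, Axiom.cnames, Concept.cnames]
  have hτ₀T : τ₀ ∉ T := fun h => hXbT τ₀ h hXτ₀
  have hα₂A : α₂ ∉ A := fun h => hXbA α₂ h (by simp [hα₂def, Assertion.cnames])
  have h12 : α₂ ≠ α₁ := by simp [hα₂def, hα₁def]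
  have hwT'T : ∀ τ ∈ T, wT' τ = wT τ := by
    intro τ hτ
    simp only [hwT'def]
    exact if_neg (fun h => hτ₀T (by rwa [← h]))
  have hwA'A : ∀ α ∈ A, α ≠ α₁ → wA' α = wA α := by
    intro α hα hne
    simp only [hwA'def]
    rw [if_neg (fun h => hα₂A (by rwa [← h])), if_neg hne]
  have hα₂w : wA' α₂ = 1 := by simp [hwA'def]
  constructor
  · rintro ⟨U, I, hP, hc, hq⟩
    intro hC
    set J := mask I Xb with hJ
    have hJP : J.Proper := hP
    have hsat1 : Assertion.sat J α₁ := (satQ_ra I hP r a b).mp hq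
    have hsat2 : ¬ Assertion.sat J α₂ := by
      simp [hα₂def, Assertion.sat, hJ, mask]
    have hcostJ : cost T A wT wA J = cost T A wT wA I := by
      unfold cost
      congr 1
      · exact Finset.sum_congr rfl fun τ hτ => by
          rw [vioCount_mask I Xb τ (hXbT τ hτ)]
      · exact Finset.sum_congr rfl fun α hα => by
          simp only [hJ, sat_mask I Xb α (hXbA α hα)]
    have hvc : Axiom.vioCount J τ₀ = 0 := by
      simp [hτ₀def, Axiom.vioCount, vioCI, Concept.interp, hJ, mask]
    have hca := cost_aux J T A wT wA τ₀ α₁ α₂ hτ₀T hα₂A h12 wT' wA'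
      hwT'T hwA'A hα₂w hsat1 hsat2
    have hcost' : cost (insert τ₀ T) (insert α₁ (insert α₂ A)) wT' wA' J
        ≤ ((k + 1 : ℕ) : ℕ∞) := by
      rw [hca, hvc, mul_zero, zero_add, hcostJ]
      calc 1 + cost T A wT wA I ≤ 1 + (k : ℕ∞) := add_le_add_right hc 1
        _ = ((k + 1 : ℕ) : ℕ∞) := by push_cast; ring
    have hsq := hC U J hJP hcost'
    rw [satQ_ca J hJP] at hsq
    exact hsat2 hsq
  · intro hC
    unfold satC at hC
    push_neg at hC
    obtain ⟨U, I, hP, hc, hq⟩ := hC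
    have hnsat2 : ¬ Assertion.sat I α₂ := fun h => hq ((satQ_ca I hP Xb a).mpr h)
    have hsat1 : Assertion.sat I α₁ := by
      by_contra hns
      have hmem : α₁ ∈ insert α₁ (insert α₂ A) := Finset.mem_insert_self _ _
      have h1 : (if Assertion.sat I α₁ then (0 : ℕ∞) else wA' α₁)
          ≤ ∑ α ∈ insert α₁ (insert α₂ A),
              (if Assertion.sat I α then (0 : ℕ∞) else wA' α) :=
        Finset.single_le_sum (f := fun α => if Assertion.sat I α then (0 : ℕ∞) else wA' α) (fun i _ => zero_le) hmem
      have h2 : (if Assertion.sat I α₁ then (0 : ℕ∞) else wA' α₁) = ⊤ := by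
        rw [if_neg hns]
        simp [hwA'def, Ne.symm h12]
      have h3 : (⊤ : ℕ∞) ≤ cost (insert τ₀ T) (insert α₁ (insert α₂ A)) wT' wA' I := by
        calc (⊤ : ℕ∞) = _ := h2.symm
          _ ≤ _ := h1
          _ ≤ _ := le_add_self
      have h4 := h3.trans hc
      rw [top_le_iff] at h4
      exact ENat.coe_ne_top (k + 1) h4
    have hca := cost_aux I T A wT wA τ₀ α₁ α₂ hτ₀T hα₂A h12 wT' wA'
      hwT'T hwA'A hα₂w hsat1 hnsat2
    rw [hca] at hc
    have h1 : 1 + cost T A wT wA I ≤ ((k + 1 : ℕ) : ℕ∞) := le_trans le_add_self hc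
    have h2 : cost T A wT wA I ≤ (k : ℕ∞) := by
      have hcast : ((k + 1 : ℕ) : ℕ∞) = 1 + (k : ℕ∞) := by push_cast; ring
      rw [hcast] at h1
      exact (WithTop.add_le_add_iff_left (by simp : (1 : ℕ∞) ≠ ⊤)).mp h1
    exact ⟨U, I, hP, h2, (satQ_ra I hP r a b).mpr hsat1⟩

end DL
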